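/- Let I be a homogeneous tropical ideal in R̄[x₀,…,xₙ], d ≥ 0, w ∈ ℝ^{n+1}, and suppose x^u is a monomial of degree d contained in in_w(I). If B is a basis of the initial matroid in_ŵ(M_d(I)) and f is the fundamental circuit H(B, x^u) of the valuated matroid M_d(I), then in_w(f) = x^u. -/

import Mathlib

/-- A valuated matroid of rank `r` on a finite ground set `E`, with values in `ℝ ∪ {∞}`:
a basis valuation function `p` on `binom(E,r)` (encoded as a function on all finsets which
is `∞` away from `r`-sets), not identically `∞`, satisfying the valuated basis exchange
axiom. -/
structure ValuatedMatroid (E : Type*) [DecidableEq E] [Fintype E] (r : ℕ) where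
  p : Finset E → WithTop ℝ
  card_of_ne_top : ∀ B : Finset E, p B ≠ ⊤ → B.card = r
  exists_ne_top : ∃ B : Finset E, p B ≠ ⊤
  exchange : ∀ A B : Finset E, A.card = r → B.card = r → ∀ a ∈ A \ B,
    ∃ b ∈ B \ A,
      p (insert b (A.erase a)) + p (insert a (B.erase b)) ≤ p A + p B

namespace ValuatedMatroid

variable {E : Type*} [DecidableEq E] [Fintype E] {r : ℕ}

/-- The shifted valuation `p_w(B) = p(B) − ∑_{e ∈ B} w_e`. -/
noncomputable def pw (M : ValuatedMatroid E r) (w : E → ℝ) (B : Finset E) : WithTop ℝ :=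
  M.p B + ((-(∑ e ∈ B, w e) : ℝ) : WithTop ℝ)

/-- The minimum of `p_w` over all subsets of `E` (equivalently over all `r`-subsets,
since `p` is `∞` elsewhere). -/
noncomputable def minVal (M : ValuatedMatroid E r) (w : E → ℝ) : WithTop ℝ :=
  (Finset.univ : Finset E).powerset.inf (M.pw w)

/-- `B` is a basis of the initial matroid `in_w(M)`: an `r`-subset minimizing `p_w`. -/
def IsInitBasis (M : ValuatedMatroid E r) (w : E → ℝ) (B : Finset E) : Prop :=
  B.card = r ∧ M.pw w B = M.minVal w

end ValuatedMatroid

namespace ValuatedMatroid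

variable {E : Type*} [DecidableEq E] [Fintype E] {r : ℕ}

/-- The fundamental circuit `H(B, e)` of `e` over a basis `B` of the underlying matroid:
`H(B,e)_{e'} = p(B ∪ e − e') − p(B)`. -/
noncomputable def fundCircuit (M : ValuatedMatroid E r) (B : Finset E) (e : E) :
    E → WithTop ℝ := fun e' =>
  M.p ((insert e B).erase e') + ((-(M.p B).untopD 0 : ℝ) : WithTop ℝ)

/-- A valuated circuit of `M`: a tropical scaling `λ ⊙ H(B, e)` of a fundamental
circuit over a basis `B` of the underlying matroid (`p(B) ≠ ∞`). -/
noncomputable def IsValuatedCircuit (M : ValuatedMatroid E r) (H : E → WithTop ℝ) : Prop :=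
  ∃ (B : Finset E) (e : E) (lam : ℝ), M.p B ≠ ⊤ ∧ e ∉ B ∧
    ∀ e', H e' = (lam : WithTop ℝ) + M.fundCircuit B e e'

/-- `in_w(H)`: the set of elements at which `H_e + w_e` is minimal. -/
def initSet (H : E → WithTop ℝ) (w : E → ℝ) : Set E :=
  {e | ∀ e', H e + (w e : WithTop ℝ) ≤ H e' + (w e' : WithTop ℝ)}

end ValuatedMatroid

open ValuatedMatroid

/-- **The key step in the existence of finite tropical bases.**  Let `M = M_d(I)` be
the valuated matroid (on the degree-`d` monomials) of a homogeneous tropical ideal, let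
`w` be the induced weight `ŵ` on the ground set, and let the monomial `u₀ = x^u` be a
loop of the initial matroid `in_ŵ(M)` (i.e. `x^u ∈ in_w(I)`).  If `B₀` is a basis of
`in_ŵ(M)` and `f = H(B₀, u₀)` is the corresponding fundamental circuit of `M`, then
`in_w(f) = {x^u}`: the minimum of `f_e + ŵ_e` is attained exactly at `u₀`. -/
theorem initSet_fundCircuit_eq_singleton_of_loop {E : Type*} [DecidableEq E] [Fintype E]
    {r : ℕ} (M : ValuatedMatroid E r) (w : E → ℝ) (u₀ : E)
    (hloop : ∀ B : Finset E, M.IsInitBasis w B → u₀ ∉ B)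
    (B₀ : Finset E) (hB₀ : M.IsInitBasis w B₀) :
    initSet (M.fundCircuit B₀ u₀) w = {u₀} := by
  obtain ⟨hcard, hmin⟩ := hB₀
  obtain ⟨Bt, hBt⟩ := M.exists_ne_top
  have hminle : ∀ B : Finset E, M.minVal w ≤ M.pw w B := fun B =>
    Finset.inf_le (Finset.mem_powerset.mpr (Finset.subset_univ B))
  have hBtne : M.pw w Bt ≠ ⊤ := by
    simp [ValuatedMatroid.pw, WithTop.add_ne_top, hBt]
  have hminne : M.minVal w ≠ ⊤ := by
    intro h
    exact hBtne (top_le_iff.mp (h ▸ hminle Bt))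
  have hpB₀ : M.p B₀ ≠ ⊤ := by
    intro h
    apply hminne
    rw [← hmin, ValuatedMatroid.pw, h]
    simp
  obtain ⟨c, hc⟩ := WithTop.ne_top_iff_exists.mp hpB₀
  have hu₀ : u₀ ∉ B₀ := hloop B₀ ⟨hcard, hmin⟩
  have hf0 : M.fundCircuit B₀ u₀ u₀ = 0 := by
    rw [ValuatedMatroid.fundCircuit, Finset.erase_insert hu₀, ← hc]
    show (↑c + ↑(-c) : WithTop ℝ) = 0
    rw [← WithTop.coe_add]
    norm_num
  have key : ∀ e' : E, e' ≠ u₀ →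
      (↑(w u₀) : WithTop ℝ) < M.fundCircuit B₀ u₀ e' + ↑(w e') := by
    intro e' hne
    by_cases hmem : e' ∈ B₀
    · -- exchange set
      have herase : (insert u₀ B₀).erase e' = insert u₀ (B₀.erase e') :=
        Finset.erase_insert_of_ne (fun h => hne h.symm)
      set B' : Finset E := insert u₀ (B₀.erase e') with hB'
      have hu₀' : u₀ ∉ B₀.erase e' := fun h => hu₀ (Finset.mem_of_mem_erase h)
      have hcard' : B'.card = r := by
        rw [hB', Finset.card_insert_of_notMem hu₀', Finset.card_erase_of_mem hmem, hcard]
        have : 1 ≤ r := by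
          rw [← hcard]
          exact Finset.card_pos.mpr ⟨e', hmem⟩
        omega
      have hu₀B' : u₀ ∈ B' := Finset.mem_insert_self _ _
      have hne' : M.pw w B' ≠ M.minVal w := by
        intro h
        exact hloop B' ⟨hcard', h⟩ hu₀B'
      have hlt : M.pw w B₀ < M.pw w B' := by
        rw [hmin]
        exact lt_of_le_of_ne (hminle B') (Ne.symm hne')
      have hsum : ∑ e ∈ B', w e = w u₀ + (∑ e ∈ B₀, w e - w e') := by
        rw [hB', Finset.sum_insert hu₀', Finset.sum_erase_eq_sub hmem]
      rw [ValuatedMatroid.fundCircuit, herase, ← hc]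
      show (↑(w u₀) : WithTop ℝ) < M.p B' + ↑(-c) + ↑(w e')
      by_cases hpB' : M.p B' = ⊤
      · rw [hpB']
        simp
      · obtain ⟨b, hb⟩ := WithTop.ne_top_iff_exists.mp hpB'
        rw [← hb]
        rw [ValuatedMatroid.pw, ValuatedMatroid.pw, ← hc, ← hb, hsum] at hlt
        have hlt2 : c + -∑ e ∈ B₀, w e < b + -(w u₀ + (∑ e ∈ B₀, w e - w e')) := by
          exact_mod_cast hlt
        have hfin : w u₀ < b + -c + w e' := by linarith
        exact_mod_cast hfin
    · -- erase does nothing; card is r+1 so p = ⊤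
      have herase : (insert u₀ B₀).erase e' = insert u₀ B₀ := by
        apply Finset.erase_eq_of_notMem
        simp [hne, hmem]
      have hcard2 : (insert u₀ B₀).card = r + 1 := by
        rw [Finset.card_insert_of_notMem hu₀, hcard]
      have hp : M.p (insert u₀ B₀) = ⊤ := by
        by_contra h
        have := M.card_of_ne_top _ h
        omega
      rw [ValuatedMatroid.fundCircuit, herase, hp]
      simp
  ext e
  simp only [initSet, Set.mem_setOf_eq, Set.mem_singleton_iff]
  constructor
  · intro h
    by_contra hne
    have h1 := h u₀
    have h2 := key e hne
    rw [hf0, zero_add] at h1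
    exact absurd (lt_of_le_of_lt h1 h2) (lt_irrefl _)
  · intro h
    rw [h]
    intro e'
    rw [hf0, zero_add]
    by_cases he' : e' = u₀
    · rw [he', hf0, zero_add]
    · exact le_of_lt (key e' he')
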